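/- Let ε ∈ (0,1) and let S, T ⊆ {0,1}^n be nonempty. If X is uniform on {0,1}^n and Y is ε-correlated with X, then Pr[X ∈ S and Y ∈ T] ≤ (μ(S)·μ(T))^{1/(1+ε)}, where μ denotes uniform measure (density). -/

import Mathlib

open Finset Real

lemma core1 {p : ℝ} (hp1 : 1 < p) (hp2 : p < 2) {s : ℝ} (hs0 : 0 ≤ s) (hs1 : s ≤ 1) :
    2 + p*(p-1)*s^2 ≤ (1+s)^p + (1-s)^p := by
  have hp0 : (0:ℝ) < p := by linarith
  set g : ℝ → ℝ := fun x => (1+x)^p + (1-x)^p - p*(p-1)*x^2 with hg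
  set g' : ℝ → ℝ := fun x => p*(1+x)^(p-1) - p*(1-x)^(p-1) - 2*p*(p-1)*x with hg'
  have hderiv : ∀ x ∈ Set.Ioo (0:ℝ) 1, HasDerivAt g (g' x) x := by
    intro x hx
    obtain ⟨hx0, hx1⟩ := hx
    have h1 : HasDerivAt (fun y : ℝ => 1+y) 1 x := (hasDerivAt_id x).const_add 1
    have h2 : HasDerivAt (fun y : ℝ => 1-y) (-1) x := (hasDerivAt_id x).const_sub 1
    have h1p := h1.rpow_const (p := p) (Or.inl (by positivity))
    have h2p := h2.rpow_const (p := p) (Or.inl (by simp; linarith))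
    have h3 : HasDerivAt (fun y : ℝ => p*(p-1)*y^2) (p*(p-1)*(2*x)) x := by
      simpa using (hasDerivAt_pow 2 x).const_mul (p*(p-1))
    have := (h1p.add h2p).sub h3
    exact this.congr_deriv (by simp only [hg']; ring)
  have hderiv' : ∀ x ∈ Set.Ioo (0:ℝ) 1,
      HasDerivAt g' (p*(p-1)*(1+x)^(p-2) + p*(p-1)*(1-x)^(p-2) - 2*p*(p-1)) x := by
    intro x hx
    obtain ⟨hx0, hx1⟩ := hx
    have h1 : HasDerivAt (fun y : ℝ => 1+y) 1 x := (hasDerivAt_id x).const_add 1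
    have h2 : HasDerivAt (fun y : ℝ => 1-y) (-1) x := (hasDerivAt_id x).const_sub 1
    have h1p := (h1.rpow_const (p := p-1) (Or.inl (by positivity))).const_mul p
    have h2p := (h2.rpow_const (p := p-1) (Or.inl (by simp; linarith))).const_mul p
    have h3 : HasDerivAt (fun y : ℝ => 2*p*(p-1)*y) (2*p*(p-1)) x := by
      simpa using (hasDerivAt_id x).const_mul (2*p*(p-1))
    have := (h1p.sub h2p).sub h3
    exact this.congr_deriv (by ring_nf)
  -- second derivative nonneg
  have hsecond : ∀ x ∈ Set.Ioo (0:ℝ) 1,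
      0 ≤ p*(p-1)*(1+x)^(p-2) + p*(p-1)*(1-x)^(p-2) - 2*p*(p-1) := by
    intro x hx
    obtain ⟨hx0, hx1⟩ := hx
    have hu : (0:ℝ) < 1+x := by linarith
    have hv : (0:ℝ) < 1-x := by linarith
    have key : 2 ≤ (1+x)^(p-2) + (1-x)^(p-2) := by
      have huv : ((1+x)*(1-x))^(p-2) = (1+x)^(p-2) * (1-x)^(p-2) :=
        Real.mul_rpow hu.le hv.le
      have h1 : (1:ℝ) ≤ ((1+x)*(1-x))^(p-2) := by
        apply Real.one_le_rpow_of_pos_of_le_one_of_nonpos (by nlinarith) (by nlinarith) (by linarith)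
      have hA : 0 ≤ (1+x)^(p-2) := Real.rpow_nonneg hu.le _
      have hB : 0 ≤ (1-x)^(p-2) := Real.rpow_nonneg hv.le _
      have hsq := sq_nonneg (Real.sqrt ((1+x)^(p-2)) - Real.sqrt ((1-x)^(p-2)))
      have e1 := Real.sq_sqrt hA
      have e2 := Real.sq_sqrt hB
      have e3 : Real.sqrt ((1+x)^(p-2)) * Real.sqrt ((1-x)^(p-2))
          = Real.sqrt ((1+x)^(p-2) * (1-x)^(p-2)) := (Real.sqrt_mul hA _).symm
      have e4 : (1:ℝ) ≤ Real.sqrt ((1+x)^(p-2) * (1-x)^(p-2)) := by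
        rw [← huv]
        calc (1:ℝ) = Real.sqrt 1 := Real.sqrt_one.symm
          _ ≤ _ := Real.sqrt_le_sqrt h1
      nlinarith [hsq, e1, e2, e3, e4]
    nlinarith [key, mul_pos hp0 (by linarith : (0:ℝ) < p-1)]
  -- g' is monotone on [0,1]
  have c1 : ContinuousOn (fun x : ℝ => (1+x)^(p-1)) (Set.Icc 0 1) :=
    ContinuousOn.rpow_const (continuousOn_const.add continuousOn_id)
      (fun x hx => Or.inr (by linarith))
  have c2 : ContinuousOn (fun x : ℝ => (1-x)^(p-1)) (Set.Icc 0 1) :=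
    ContinuousOn.rpow_const (continuousOn_const.sub continuousOn_id)
      (fun x hx => Or.inr (by linarith))
  have hcont' : ContinuousOn g' (Set.Icc 0 1) :=
    ((continuousOn_const.mul c1).sub (continuousOn_const.mul c2)).sub
      (continuousOn_const.mul continuousOn_id)
  have hmono' : MonotoneOn g' (Set.Icc 0 1) := by
    apply monotoneOn_of_deriv_nonneg (convex_Icc 0 1) hcont'
    · intro x hx
      rw [interior_Icc] at hx
      exact (hderiv' x hx).differentiableAt.differentiableWithinAt
    · intro x hx
      rw [interior_Icc] at hx
      rw [(hderiv' x hx).deriv]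
      exact hsecond x hx
  have hg'0 : g' 0 = 0 := by simp [hg']
  have hg'nonneg : ∀ x ∈ Set.Icc (0:ℝ) 1, 0 ≤ g' x := by
    intro x hx
    have := hmono' (Set.left_mem_Icc.2 zero_le_one) hx hx.1
    rw [hg'0] at this; exact this
  have hcont : ContinuousOn g (Set.Icc 0 1) := by
    apply ContinuousOn.sub
    apply ContinuousOn.add
    · exact (continuousOn_const.add continuousOn_id).rpow_const (fun x hx => Or.inr (by linarith))
    · exact (continuousOn_const.sub continuousOn_id).rpow_const (fun x hx => Or.inr (by linarith))
    · exact continuousOn_const.mul (continuousOn_pow 2)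
  have hmono : MonotoneOn g (Set.Icc 0 1) := by
    apply monotoneOn_of_deriv_nonneg (convex_Icc 0 1) hcont
    · intro x hx
      rw [interior_Icc] at hx
      exact (hderiv x hx).differentiableAt.differentiableWithinAt
    · intro x hx
      rw [interior_Icc] at hx
      rw [(hderiv x hx).deriv]
      exact hg'nonneg x (Set.mem_Icc_of_Ioo hx)
  have hg0 : g 0 = 2 := by norm_num [hg]
  have := hmono (Set.left_mem_Icc.2 zero_le_one) (Set.mem_Icc.2 ⟨hs0, hs1⟩) hs0
  rw [hg0] at this
  simp only [hg] at this
  linarith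

lemma core2 {ε : ℝ} (hε0 : 0 < ε) (hε1 : ε < 1) {s : ℝ} (hs : -1 ≤ s) (hs1 : s ≤ 1) :
    (1 + ε*s^2) ^ ((1+ε)/2) ≤ ((1+s)^(1+ε) + (1-s)^(1+ε))/2 := by
  have hb : (1 + ε*s^2) ^ ((1+ε)/2) ≤ 1 + (1+ε)/2 * (ε*s^2) := by
    have := rpow_one_add_le_one_add_mul_self (s := ε*s^2) (by nlinarith [sq_nonneg s])
      (p := (1+ε)/2) (by linarith) (by linarith)
    linarith
  have habs : (1+s)^(1+ε) + (1-s)^(1+ε) = (1+|s|)^(1+ε) + (1-|s|)^(1+ε) := by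
    rcases abs_cases s with ⟨h, _⟩ | ⟨h, _⟩
    · rw [h]
    · rw [h]; ring_nf
  have hc := core1 (p := 1+ε) (by linarith) (by linarith) (s := |s|)
    (abs_nonneg s) (abs_le.2 ⟨hs, hs1⟩)
  rw [habs]
  have : |s|^2 = s^2 := sq_abs s
  rw [this] at hc
  nlinarith [hc, hb]

lemma core3 {ε : ℝ} (hε0 : 0 < ε) (hε1 : ε < 1) {s t : ℝ}
    (hs : -1 ≤ s) (hs1 : s ≤ 1) (ht : -1 ≤ t) (ht1 : t ≤ 1) :
    1 + ε*s*t ≤ (((1+s)^(1+ε) + (1-s)^(1+ε))/2)^((1+ε)⁻¹)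
      * (((1+t)^(1+ε) + (1-t)^(1+ε))/2)^((1+ε)⁻¹) := by
  have hp0 : (0:ℝ) < 1+ε := by linarith
  have step : ∀ u : ℝ, -1 ≤ u → u ≤ 1 →
      Real.sqrt (1 + ε*u^2) ≤ (((1+u)^(1+ε) + (1-u)^(1+ε))/2)^((1+ε)⁻¹) := by
    intro u hu hu1
    have h1 : (0:ℝ) ≤ 1 + ε*u^2 := by positivity
    have h2 := core2 hε0 hε1 hu hu1
    have h3 : ((1 + ε*u^2) ^ ((1+ε)/2)) ^ ((1+ε)⁻¹)
        ≤ (((1+u)^(1+ε) + (1-u)^(1+ε))/2)^((1+ε)⁻¹) :=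
      rpow_le_rpow (by positivity) h2 (by positivity)
    have h4 : ((1 + ε*u^2) ^ ((1+ε)/2)) ^ ((1+ε)⁻¹) = (1 + ε*u^2) ^ ((1:ℝ)/2) := by
      rw [← Real.rpow_mul h1]
      congr 1
      field_simp
    calc Real.sqrt (1 + ε*u^2) = (1 + ε*u^2) ^ ((1:ℝ)/2) := Real.sqrt_eq_rpow _
      _ = ((1 + ε*u^2) ^ ((1+ε)/2)) ^ ((1+ε)⁻¹) := h4.symm
      _ ≤ _ := h3
  have hss := step s hs hs1
  have hts := step t ht ht1
  have hs2 : s^2 ≤ 1 := by nlinarith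
  have ht2 : t^2 ≤ 1 := by nlinarith
  have hst : -1 ≤ s*t := by nlinarith [sq_nonneg (s+t)]
  have base : 1 + ε*s*t ≤ Real.sqrt (1 + ε*s^2) * Real.sqrt (1 + ε*t^2) := by
    rw [← Real.sqrt_mul (by positivity)]
    have h0 : (0:ℝ) ≤ 1 + ε*s*t := by nlinarith
    have hsq : (1 + ε*s*t)^2 ≤ (1 + ε*s^2) * (1 + ε*t^2) := by nlinarith [sq_nonneg (s-t), sq_nonneg (s*t), mul_pos hε0 hε0]
    calc 1 + ε*s*t = Real.sqrt ((1 + ε*s*t)^2) := (Real.sqrt_sq h0).symm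
      _ ≤ _ := Real.sqrt_le_sqrt hsq
  calc 1 + ε*s*t ≤ Real.sqrt (1 + ε*s^2) * Real.sqrt (1 + ε*t^2) := base
    _ ≤ _ := by
        apply mul_le_mul hss hts (Real.sqrt_nonneg _)
          (Real.rpow_nonneg (div_nonneg (add_nonneg (Real.rpow_nonneg (by linarith) _)
            (Real.rpow_nonneg (by linarith) _)) (by norm_num)) _)

lemma norm_half_nonneg {ε a0 a1 : ℝ} (ha0 : 0 ≤ a0) (ha1 : 0 ≤ a1) :
    0 ≤ ((a0^(1+ε) + a1^(1+ε))/2)^((1+ε)⁻¹) :=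
  Real.rpow_nonneg (div_nonneg (add_nonneg (Real.rpow_nonneg ha0 _)
    (Real.rpow_nonneg ha1 _)) (by norm_num)) _

lemma twopoint {ε : ℝ} (hε0 : 0 < ε) (hε1 : ε < 1) {a0 a1 b0 b1 : ℝ}
    (ha0 : 0 ≤ a0) (ha1 : 0 ≤ a1) (hb0 : 0 ≤ b0) (hb1 : 0 ≤ b1) :
    (1+ε)/4*(a0*b0+a1*b1) + (1-ε)/4*(a0*b1+a1*b0)
      ≤ ((a0^(1+ε)+a1^(1+ε))/2)^((1+ε)⁻¹) * ((b0^(1+ε)+b1^(1+ε))/2)^((1+ε)⁻¹) := by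
  have hp0 : (0:ℝ) < 1+ε := by linarith
  rcases eq_or_lt_of_le (add_nonneg ha0 ha1) with hA | hA
  · have h0 : a0 = 0 := by linarith
    have h1 : a1 = 0 := by linarith
    rw [h0, h1]
    have heq : (1+ε)/4*((0:ℝ)*b0+0*b1) + (1-ε)/4*((0:ℝ)*b1+0*b0) = 0 := by ring
    rw [heq]
    exact mul_nonneg (norm_half_nonneg le_rfl le_rfl) (norm_half_nonneg hb0 hb1)
  rcases eq_or_lt_of_le (add_nonneg hb0 hb1) with hB | hB
  · have h0 : b0 = 0 := by linarith
    have h1 : b1 = 0 := by linarith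
    rw [h0, h1]
    have heq : (1+ε)/4*(a0*(0:ℝ)+a1*0) + (1-ε)/4*(a0*(0:ℝ)+a1*0) = 0 := by ring
    rw [heq]
    exact mul_nonneg (norm_half_nonneg ha0 ha1) (norm_half_nonneg le_rfl le_rfl)
  · set a : ℝ := (a0+a1)/2 with hadef
    set b : ℝ := (b0+b1)/2 with hbdef
    set s : ℝ := (a0-a1)/(a0+a1) with hsdef
    set t : ℝ := (b0-b1)/(b0+b1) with htdef
    have ha : 0 < a := by simp [hadef]; linarith
    have hb : 0 < b := by simp [hbdef]; linarith
    have hA' : (0:ℝ) < a0+a1 := by linarith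
    have hB' : (0:ℝ) < b0+b1 := by linarith
    have ea0 : a0 = a*(1+s) := by rw [hadef, hsdef]; field_simp; ring
    have ea1 : a1 = a*(1-s) := by rw [hadef, hsdef]; field_simp; ring
    have eb0 : b0 = b*(1+t) := by rw [hbdef, htdef]; field_simp; ring
    have eb1 : b1 = b*(1-t) := by rw [hbdef, htdef]; field_simp; ring
    have hs1 : s ≤ 1 := by rw [hsdef, div_le_one hA']; linarith
    have hs0 : -1 ≤ s := by rw [hsdef, le_div_iff₀ hA']; linarith
    have ht1 : t ≤ 1 := by rw [htdef, div_le_one hB']; linarith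
    have ht0 : -1 ≤ t := by rw [htdef, le_div_iff₀ hB']; linarith
    have hsplus : (0:ℝ) ≤ 1+s := by linarith
    have hsminus : (0:ℝ) ≤ 1-s := by linarith
    have htplus : (0:ℝ) ≤ 1+t := by linarith
    have htminus : (0:ℝ) ≤ 1-t := by linarith
    have hna : ((a0^(1+ε)+a1^(1+ε))/2)^((1+ε)⁻¹)
        = a * (((1+s)^(1+ε)+(1-s)^(1+ε))/2)^((1+ε)⁻¹) := by
      rw [ea0, ea1, Real.mul_rpow ha.le hsplus, Real.mul_rpow ha.le hsminus]
      have : (a^(1+ε)*(1+s)^(1+ε) + a^(1+ε)*(1-s)^(1+ε))/2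
          = a^(1+ε) * (((1+s)^(1+ε)+(1-s)^(1+ε))/2) := by ring
      rw [this, Real.mul_rpow (Real.rpow_nonneg ha.le _)
        (div_nonneg (add_nonneg (Real.rpow_nonneg hsplus _) (Real.rpow_nonneg hsminus _)) (by norm_num)),
        Real.rpow_rpow_inv ha.le (by linarith)]
    have hnb : ((b0^(1+ε)+b1^(1+ε))/2)^((1+ε)⁻¹)
        = b * (((1+t)^(1+ε)+(1-t)^(1+ε))/2)^((1+ε)⁻¹) := by
      rw [eb0, eb1, Real.mul_rpow hb.le htplus, Real.mul_rpow hb.le htminus]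
      have : (b^(1+ε)*(1+t)^(1+ε) + b^(1+ε)*(1-t)^(1+ε))/2
          = b^(1+ε) * (((1+t)^(1+ε)+(1-t)^(1+ε))/2) := by ring
      rw [this, Real.mul_rpow (Real.rpow_nonneg hb.le _)
        (div_nonneg (add_nonneg (Real.rpow_nonneg htplus _) (Real.rpow_nonneg htminus _)) (by norm_num)),
        Real.rpow_rpow_inv hb.le (by linarith)]
    have hLHS : (1+ε)/4*(a0*b0+a1*b1) + (1-ε)/4*(a0*b1+a1*b0) = a*b*(1+ε*s*t) := by
      rw [ea0, ea1, eb0, eb1]; ring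
    rw [hLHS, hna, hnb]
    have hcore := core3 hε0 hε1 hs0 hs1 ht0 ht1
    calc a*b*(1+ε*s*t)
        ≤ a*b*((((1+s)^(1+ε)+(1-s)^(1+ε))/2)^((1+ε)⁻¹) * (((1+t)^(1+ε)+(1-t)^(1+ε))/2)^((1+ε)⁻¹)) := by
          apply mul_le_mul_of_nonneg_left hcore (by positivity)
      _ = a * (((1+s)^(1+ε)+(1-s)^(1+ε))/2)^((1+ε)⁻¹) * (b * (((1+t)^(1+ε)+(1-t)^(1+ε))/2)^((1+ε)⁻¹)) := by ring

lemma sum_cons_bool {n : ℕ} {M : Type*} [AddCommMonoid M] (F : (Fin (n+1) → Bool) → M) :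
    ∑ x : Fin (n+1) → Bool, F x = ∑ b : Bool, ∑ x : Fin n → Bool, F (Fin.cons b x) := by
  calc ∑ x : Fin (n+1) → Bool, F x
      = ∑ p : Bool × (Fin n → Bool), F (Fin.cons p.1 p.2) :=
        (Fintype.sum_equiv (Fin.consEquiv (fun _ => Bool)) _ _ (fun p => rfl)).symm
    _ = ∑ b : Bool, ∑ x : Fin n → Bool, F (Fin.cons b x) := Fintype.sum_prod_type (f := fun p => F (Fin.cons p.1 p.2))

set_option maxHeartbeats 2000000 in
lemma key {ε : ℝ} (hε0 : 0 < ε) (hε1 : ε < 1) :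
    ∀ (n : ℕ) (f g : (Fin n → Bool) → ℝ), (∀ x, 0 ≤ f x) → (∀ y, 0 ≤ g y) →
    ∑ x : Fin n → Bool, ∑ y : Fin n → Bool,
        f x * g y * ∏ i, ((if x i = y i then (1+ε)/2 else (1-ε)/2)/2)
      ≤ (∑ x : Fin n → Bool, ((2:ℝ)^n)⁻¹ * (f x)^(1+ε))^((1+ε)⁻¹)
        * (∑ y : Fin n → Bool, ((2:ℝ)^n)⁻¹ * (g y)^(1+ε))^((1+ε)⁻¹) := by
  have hp0 : (0:ℝ) < 1+ε := by linarith
  have hpne : (1:ℝ)+ε ≠ 0 := by linarith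
  intro n
  induction n with
  | zero =>
    intro f g hf hg
    simp only [Finset.univ_unique, Finset.sum_singleton, Finset.univ_eq_empty,
      Finset.prod_empty, pow_zero, inv_one, one_mul, mul_one]
    rw [Real.rpow_rpow_inv (hf _) hpne, Real.rpow_rpow_inv (hg _) hpne]
  | succ n IH =>
    intro f g hf hg
    set W : Bool → Bool → ℝ := fun b b' => ((if b = b' then (1+ε)/2 else (1-ε)/2)/2) with hW
    have hWnn : ∀ b b', 0 ≤ W b b' := by
      intro b b'; rw [hW]; dsimp only; split <;> linarith
    set N : ((Fin n → Bool) → ℝ) → ℝ :=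
      fun h => (∑ x : Fin n → Bool, ((2:ℝ)^n)⁻¹ * (h x)^(1+ε))^((1+ε)⁻¹) with hN
    have hNnn : ∀ h : (Fin n → Bool) → ℝ, (∀ x, 0 ≤ h x) → 0 ≤ N h := by
      intro h hh
      exact Real.rpow_nonneg (Finset.sum_nonneg (fun x _ =>
        mul_nonneg (by positivity) (Real.rpow_nonneg (hh x) _))) _
    have hNpow : ∀ h : (Fin n → Bool) → ℝ, (∀ x, 0 ≤ h x) →
        (N h)^(1+ε) = ∑ x : Fin n → Bool, ((2:ℝ)^n)⁻¹ * (h x)^(1+ε) := by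
      intro h hh
      rw [hN]
      exact Real.rpow_inv_rpow (Finset.sum_nonneg (fun x _ =>
        mul_nonneg (by positivity) (Real.rpow_nonneg (hh x) _))) hpne
    have hL : (∑ x : Fin (n+1) → Bool, ∑ y : Fin (n+1) → Bool,
          f x * g y * ∏ i, ((if x i = y i then (1+ε)/2 else (1-ε)/2)/2))
        = ∑ b : Bool, ∑ b' : Bool, W b b' *
            (∑ x : Fin n → Bool, ∑ y : Fin n → Bool,
              f (Fin.cons b x) * g (Fin.cons b' y)
                * ∏ i, ((if x i = y i then (1+ε)/2 else (1-ε)/2)/2)) := by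
      rw [sum_cons_bool]
      refine Finset.sum_congr rfl (fun b _ => ?_)
      simp only [Finset.mul_sum]
      rw [Finset.sum_comm (s := (Finset.univ : Finset Bool))
        (t := (Finset.univ : Finset (Fin n → Bool)))]
      refine Finset.sum_congr rfl (fun x _ => ?_)
      rw [sum_cons_bool]
      refine Finset.sum_congr rfl (fun b' _ => ?_)
      refine Finset.sum_congr rfl (fun y _ => ?_)
      rw [Fin.prod_univ_succ]
      simp only [Fin.cons_zero, Fin.cons_succ, hW]
      ring
    rw [hL]
    have hbound : ∀ b b' : Bool,
        (∑ x : Fin n → Bool, ∑ y : Fin n → Bool,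
          f (Fin.cons b x) * g (Fin.cons b' y)
            * ∏ i, ((if x i = y i then (1+ε)/2 else (1-ε)/2)/2))
        ≤ N (fun x => f (Fin.cons b x)) * N (fun y => g (Fin.cons b' y)) :=
      fun b b' => IH _ _ (fun x => hf _) (fun y => hg _)
    have step1 : ∑ b : Bool, ∑ b' : Bool, W b b' *
            (∑ x : Fin n → Bool, ∑ y : Fin n → Bool,
              f (Fin.cons b x) * g (Fin.cons b' y)
                * ∏ i, ((if x i = y i then (1+ε)/2 else (1-ε)/2)/2))
        ≤ ∑ b : Bool, ∑ b' : Bool, W b b'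
            * (N (fun x => f (Fin.cons b x)) * N (fun y => g (Fin.cons b' y))) :=
      Finset.sum_le_sum (fun b _ => Finset.sum_le_sum (fun b' _ =>
        mul_le_mul_of_nonneg_left (hbound b b') (hWnn b b')))
    set a0 := N (fun x => f (Fin.cons false x)) with ha0def
    set a1 := N (fun x => f (Fin.cons true x)) with ha1def
    set c0 := N (fun y => g (Fin.cons false y)) with hc0def
    set c1 := N (fun y => g (Fin.cons true y)) with hc1def
    have ha0 : 0 ≤ a0 := hNnn _ (fun x => hf _)
    have ha1 : 0 ≤ a1 := hNnn _ (fun x => hf _)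
    have hc0 : 0 ≤ c0 := hNnn _ (fun y => hg _)
    have hc1 : 0 ≤ c1 := hNnn _ (fun y => hg _)
    have step2 : (∑ b : Bool, ∑ b' : Bool, W b b'
            * (N (fun x => f (Fin.cons b x)) * N (fun y => g (Fin.cons b' y))))
        = (1+ε)/4*(a0*c0+a1*c1) + (1-ε)/4*(a0*c1+a1*c0) := by
      simp only [Fintype.sum_bool, hW]
      norm_num
      ring
    have step3 := twopoint hε0 hε1 ha0 ha1 hc0 hc1
    have esum : ∀ hh : (Fin n → Bool) → ℝ, (∑ x : Fin n → Bool, ((2:ℝ)^n)⁻¹ * hh x)/2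
        = ∑ x : Fin n → Bool, ((2:ℝ)^(n+1))⁻¹ * hh x := by
      intro hh
      rw [Finset.sum_div]
      refine Finset.sum_congr rfl (fun x _ => ?_)
      rw [pow_succ, mul_inv]
      ring
    have hfa : (a0^(1+ε)+a1^(1+ε))/2
        = ∑ x : Fin (n+1) → Bool, ((2:ℝ)^(n+1))⁻¹ * (f x)^(1+ε) := by
      rw [ha0def, ha1def, hNpow _ (fun x => hf _), hNpow _ (fun x => hf _),
        sum_cons_bool (fun x => ((2:ℝ)^(n+1))⁻¹ * (f x)^(1+ε)), Fintype.sum_bool]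
      rw [add_div, esum, esum]
      ring
    have hga : (c0^(1+ε)+c1^(1+ε))/2
        = ∑ y : Fin (n+1) → Bool, ((2:ℝ)^(n+1))⁻¹ * (g y)^(1+ε) := by
      rw [hc0def, hc1def, hNpow _ (fun y => hg _), hNpow _ (fun y => hg _),
        sum_cons_bool (fun y => ((2:ℝ)^(n+1))⁻¹ * (g y)^(1+ε)), Fintype.sum_bool]
      rw [add_div, esum, esum]
      ring
    calc ∑ b : Bool, ∑ b' : Bool, W b b' *
            (∑ x : Fin n → Bool, ∑ y : Fin n → Bool,
              f (Fin.cons b x) * g (Fin.cons b' y)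
                * ∏ i, ((if x i = y i then (1+ε)/2 else (1-ε)/2)/2))
        ≤ ∑ b : Bool, ∑ b' : Bool, W b b'
            * (N (fun x => f (Fin.cons b x)) * N (fun y => g (Fin.cons b' y))) := step1
      _ = (1+ε)/4*(a0*c0+a1*c1) + (1-ε)/4*(a0*c1+a1*c0) := step2
      _ ≤ ((a0^(1+ε)+a1^(1+ε))/2)^((1+ε)⁻¹) * ((c0^(1+ε)+c1^(1+ε))/2)^((1+ε)⁻¹) := step3
      _ = _ := by rw [hfa, hga]

/-- Boolean case: `Pr[X ∈ S, Y ∈ T] ≤ (μ(S)μ(T))^{1/(1+ε)}` for an ε-correlated pair. -/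
theorem boolean_hypercontractivity (n : ℕ) (ε : ℝ) (hε : ε ∈ Set.Ioo (0:ℝ) 1)
    (S T : Finset (Fin n → Bool)) (hS : S.Nonempty) (hT : T.Nonempty) :
    ∑ x ∈ S, ∑ y ∈ T,
        ((2:ℝ)^n)⁻¹ * ∏ i, (if x i = y i then (1+ε)/2 else (1-ε)/2)
      ≤ (((S.card : ℝ) / 2^n) * ((T.card : ℝ) / 2^n)) ^ ((1+ε)⁻¹) := by
  obtain ⟨hε0, hε1⟩ := hε
  have hpne : (1:ℝ)+ε ≠ 0 := by linarith
  have hfnn : ∀ x : Fin n → Bool, (0:ℝ) ≤ (if x ∈ S then 1 else 0) := fun x => by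
    split <;> norm_num
  have hgnn : ∀ y : Fin n → Bool, (0:ℝ) ≤ (if y ∈ T then 1 else 0) := fun y => by
    split <;> norm_num
  have hk := key hε0 hε1 n (fun x => if x ∈ S then 1 else 0) (fun y => if y ∈ T then 1 else 0)
    hfnn hgnn
  have h1 : ∀ (U : Finset (Fin n → Bool)) (A : (Fin n → Bool) → ℝ),
      ∑ x : Fin n → Bool, (if x ∈ U then (1:ℝ) else 0) * A x = ∑ x ∈ U, A x := by
    intro U A
    simp only [ite_mul, one_mul, zero_mul]
    rw [Finset.sum_ite_mem, Finset.univ_inter]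
  have hprod : ∀ x y : Fin n → Bool,
      (∏ i, ((if x i = y i then (1+ε)/2 else (1-ε)/2)/2))
      = ((2:ℝ)^n)⁻¹ * ∏ i, (if x i = y i then (1+ε)/2 else (1-ε)/2) := by
    intro x y
    rw [Finset.prod_div_distrib, Finset.prod_const]
    simp only [Finset.card_univ, Fintype.card_fin]
    rw [div_eq_mul_inv, mul_comm]
  have hL : ∑ x : Fin n → Bool, ∑ y : Fin n → Bool,
        (if x ∈ S then (1:ℝ) else 0) * (if y ∈ T then (1:ℝ) else 0)
          * ∏ i, ((if x i = y i then (1+ε)/2 else (1-ε)/2)/2)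
      = ∑ x ∈ S, ∑ y ∈ T,
        ((2:ℝ)^n)⁻¹ * ∏ i, (if x i = y i then (1+ε)/2 else (1-ε)/2) := by
    rw [← h1 S (fun x => ∑ y ∈ T, ((2:ℝ)^n)⁻¹ * ∏ i, (if x i = y i then (1+ε)/2 else (1-ε)/2))]
    refine Finset.sum_congr rfl (fun x _ => ?_)
    rw [Finset.mul_sum, ← h1 T (fun y => (if x ∈ S then (1:ℝ) else 0)
      * (((2:ℝ)^n)⁻¹ * ∏ i, (if x i = y i then (1+ε)/2 else (1-ε)/2)))]
    refine Finset.sum_congr rfl (fun y _ => ?_)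
    rw [hprod]
    ring
  have hnorm : ∀ (U : Finset (Fin n → Bool)),
      ∑ x : Fin n → Bool, ((2:ℝ)^n)⁻¹ * ((if x ∈ U then (1:ℝ) else 0))^(1+ε)
      = (U.card : ℝ) / 2^n := by
    intro U
    have he : ∀ x : Fin n → Bool, ((if x ∈ U then (1:ℝ) else 0))^(1+ε)
        = if x ∈ U then (1:ℝ) else 0 := by
      intro x
      split
      · exact Real.one_rpow _
      · exact Real.zero_rpow hpne
    simp only [he, mul_ite, mul_one, mul_zero]
    rw [Finset.sum_ite_mem, Finset.univ_inter, Finset.sum_const, nsmul_eq_mul]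
    rw [div_eq_mul_inv]
  rw [hL, hnorm, hnorm] at hk
  refine hk.trans_eq ?_
  rw [← Real.mul_rpow (by positivity) (by positivity)]
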